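/- arXiv:math-ph/9908008 — 2 statements merged into one kernel-verified Lean document; each statement's English description precedes it below -/
import Mathlib

section
/- Let f be a Schwartz function on ℝ³. Then there exist C > 0, R₀ > 0, T₀ > 0 such that for all x ∈ ℝ³ with |x| ≥ R₀ and all t ≥ T₀, and every integer 0 ≤ q ≤ 1, (|x|/t)^q · |∫_{ℝ³} e^{i|x||y|/(2t)} f(y)/|y| d³y| ≤ C. -/
open MeasureTheory

open MeasureTheory Measure Set Metric Filter Complex Topology
set_option maxHeartbeats 1000000

lemma oneD_bound {l : ℝ} (hl : 0 < l) (φ φ' : ℝ → ℂ)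
    (hd : ∀ r, HasDerivAt φ (φ' r) r) (h0 : φ 0 = 0) (hcont' : Continuous φ')
    (hint : IntegrableOn (fun r : ℝ => Complex.exp (Complex.I * l * r) * φ r) (Ioi 0))
    (hint' : IntegrableOn φ' (Ioi 0))
    (hnorm' : IntegrableOn (fun r : ℝ => ‖φ' r‖) (Ioi 0))
    (hlim : Tendsto φ atTop (nhds 0)) :
    ‖∫ r in Ioi (0:ℝ), Complex.exp (Complex.I * l * r) * φ r‖ ≤
      (1/l) * ∫ r in Ioi (0:ℝ), ‖φ' r‖ := by
  have hc : (Complex.I * l) ≠ 0 := by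
    simp [Complex.ext_iff, hl.ne']
  set v : ℝ → ℂ := fun r => Complex.exp (Complex.I * l * r) / (Complex.I * l) with hv
  have habs : ‖Complex.I * (l:ℂ)‖ = l := by
    simp [abs_of_pos hl]
  have hvnorm : ∀ r : ℝ, ‖v r‖ = 1 / l := by
    intro r
    simp only [hv, norm_div, Complex.norm_exp, habs]
    norm_num
  have hvd : ∀ r : ℝ, HasDerivAt v (Complex.exp (Complex.I * l * r)) r := by
    intro r
    have h1 : HasDerivAt (fun r : ℝ => Complex.I * l * r) (Complex.I * l) r := by
      simpa using (Complex.ofRealCLM.hasDerivAt (x := r)).const_mul (Complex.I * l)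
    have h2 := ((Complex.hasDerivAt_exp _).comp r h1).div_const (Complex.I * l)
    simpa [mul_div_assoc, mul_div_cancel_right₀ _ hc] using h2
  have hφc : Continuous φ := by
    refine continuous_iff_continuousAt.2 fun x => (hd x).continuousAt
  -- integration by parts on [0, T]
  have key : ∀ T : ℝ, ∫ r in (0:ℝ)..T, φ r * Complex.exp (Complex.I * l * r) =
      φ T * v T - ∫ r in (0:ℝ)..T, φ' r * v r := by
    intro T
    have := intervalIntegral.integral_mul_deriv_eq_deriv_mul
      (u := φ) (u' := φ') (v := v) (v' := fun r => Complex.exp (Complex.I * l * r))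
      (fun x _ => hd x) (fun x _ => hvd x)
      (hcont'.intervalIntegrable 0 T)
      ((Continuous.intervalIntegrable (by continuity) 0 T))
    rw [this, h0, zero_mul, sub_zero]
  -- v times φ' is integrable on Ioi 0
  have hvint : IntegrableOn (fun r : ℝ => φ' r * v r) (Ioi 0) := by
    refine Integrable.mono' (hnorm'.mul_const (1/l)) ?_ ?_
    · exact ((hcont'.mul (by continuity)).aestronglyMeasurable).restrict
    · filter_upwards with r
      rw [norm_mul, hvnorm r]
  -- limit of LHS
  have h1 : Tendsto (fun T => ∫ r in (0:ℝ)..T, φ r * Complex.exp (Complex.I * l * r)) atTop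
      (nhds (∫ r in Ioi (0:ℝ), φ r * Complex.exp (Complex.I * l * r))) := by
    refine intervalIntegral_tendsto_integral_Ioi 0 ?_ tendsto_id
    exact hint.congr_fun (fun x _ => mul_comm _ _) measurableSet_Ioi
  have h2 : Tendsto (fun T => ∫ r in (0:ℝ)..T, φ' r * v r) atTop
      (nhds (∫ r in Ioi (0:ℝ), φ' r * v r)) :=
    intervalIntegral_tendsto_integral_Ioi 0 hvint tendsto_id
  have h3 : Tendsto (fun T => φ T * v T) atTop (nhds 0) := by
    have hb : ∀ T : ℝ, ‖φ T * v T‖ ≤ ‖φ T‖ * (1/l) := fun T =>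
      le_of_eq (by rw [norm_mul, hvnorm])
    exact squeeze_zero_norm hb (by simpa using (hlim.norm.mul_const (1/l)))
  have heq : ∫ r in Ioi (0:ℝ), φ r * Complex.exp (Complex.I * l * r) =
      0 - ∫ r in Ioi (0:ℝ), φ' r * v r := by
    refine tendsto_nhds_unique h1 ?_
    have := h3.sub h2
    simpa only [] using this.congr (fun T => (key T).symm)
  have heq2 : ∫ r in Ioi (0:ℝ), Complex.exp (Complex.I * l * r) * φ r =
      - ∫ r in Ioi (0:ℝ), φ' r * v r := by
    calc ∫ r in Ioi (0:ℝ), Complex.exp (Complex.I * l * r) * φ r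
        = ∫ r in Ioi (0:ℝ), φ r * Complex.exp (Complex.I * l * r) :=
          setIntegral_congr_fun measurableSet_Ioi (fun x _ => mul_comm _ _)
      _ = 0 - ∫ r in Ioi (0:ℝ), φ' r * v r := heq
      _ = - ∫ r in Ioi (0:ℝ), φ' r * v r := _root_.zero_sub _
  rw [heq2, norm_neg]
  calc ‖∫ r in Ioi (0:ℝ), φ' r * v r‖ ≤ ∫ r in Ioi (0:ℝ), ‖φ' r * v r‖ :=
        norm_integral_le_integral_norm _
    _ = ∫ r in Ioi (0:ℝ), ‖φ' r‖ * (1/l) := by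
        refine setIntegral_congr_fun measurableSet_Ioi (fun r _ => ?_)
        rw [norm_mul, hvnorm]
    _ = (1/l) * ∫ r in Ioi (0:ℝ), ‖φ' r‖ := by
        rw [integral_mul_const, mul_comm]

section polar

variable {E : Type*} [NormedAddCommGroup E] [NormedSpace ℝ E] [MeasurableSpace E]
  [BorelSpace E] [FiniteDimensional ℝ E] [Nontrivial E]
  (μ : Measure E) [μ.IsAddHaarMeasure]

lemma polar_integral (F : E → ℂ) :
    ∫ y, F y ∂μ = ∫ p : sphere (0:E) 1 × Ioi (0:ℝ),
      F (p.2.1 • p.1.1) ∂(μ.toSphere.prod (volumeIoiPow (Module.finrank ℝ E - 1))) := by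
  have h1 : ∫ y, F y ∂μ = ∫ x : ({(0:E)}ᶜ : Set E), F x.1 ∂(μ.comap Subtype.val) := by
    rw [integral_subtype_comap (measurableSet_singleton _).compl, restrict_compl_singleton]
  rw [h1, ← μ.measurePreserving_homeomorphUnitSphereProd.integral_comp
    (Homeomorph.measurableEmbedding _) (fun p => F (p.2.1 • p.1.1))]
  refine integral_congr_ae (Filter.Eventually.of_forall fun x => ?_)
  simp only [homeomorphUnitSphereProd_apply_fst_coe, homeomorphUnitSphereProd_apply_snd_coe]
  rw [smul_inv_smul₀ (norm_ne_zero_iff.2 x.2)]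

end polar

lemma volumeIoiPow_integral {X : Type*} [NormedAddCommGroup X] [NormedSpace ℝ X]
    (n : ℕ) (H : ℝ → X) :
    ∫ r : Ioi (0:ℝ), H r.1 ∂(volumeIoiPow n) = ∫ r in Ioi (0:ℝ), (r ^ n) • H r := by
  simp only [Measure.volumeIoiPow, ENNReal.ofReal]
  rw [integral_withDensity_eq_integral_smul
      ((measurable_subtype_coe.pow_const _).real_toNNReal),
    integral_subtype_comap measurableSet_Ioi (fun a => Real.toNNReal (a ^ n) • H a)]
  refine setIntegral_congr_fun measurableSet_Ioi (fun r hr => ?_)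
  rw [NNReal.smul_def, Real.coe_toNNReal _ (pow_nonneg hr.out.le _)]

lemma integrable_subtype_comap_iff {α : Type*} [MeasurableSpace α] {μ : Measure α}
    {s : Set α} (hs : MeasurableSet s) (h : α → ℂ) :
    Integrable (fun x : s => h x.1) (μ.comap Subtype.val) ↔ IntegrableOn h s μ := by
  rw [IntegrableOn, ← map_comap_subtype_coe hs,
    (MeasurableEmbedding.subtype_coe hs).integrable_map_iff]
  rfl

lemma volumeIoiPow_integrable_iff (n : ℕ) (H : ℝ → ℂ) :
    Integrable (fun r : Ioi (0:ℝ) => H r.1) (volumeIoiPow n) ↔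
      IntegrableOn (fun r : ℝ => Real.toNNReal (r ^ n) • H r) (Ioi 0) := by
  simp only [Measure.volumeIoiPow, ENNReal.ofReal]
  rw [integrable_withDensity_iff_integrable_smul
      ((measurable_subtype_coe.pow_const _).real_toNNReal),
    ← integrable_subtype_comap_iff measurableSet_Ioi
      (fun r : ℝ => Real.toNNReal (r ^ n) • H r)]

local notation "E3" => EuclideanSpace ℝ (Fin 3)

lemma schwartz_polar_bound (f : SchwartzMap (EuclideanSpace ℝ (Fin 3)) ℂ) :
    ∃ M : ℝ, 0 < M ∧ ∀ l : ℝ, 0 < l →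
      ‖∫ y : E3, Complex.exp (Complex.I * l * ‖y‖) * f y / (‖y‖ : ℂ)‖ ≤ M ∧
      l * ‖∫ y : E3, Complex.exp (Complex.I * l * ‖y‖) * f y / (‖y‖ : ℂ)‖ ≤ M := by
  classical
  -- Schwartz decay constant
  set D : ℝ := 2 ^ 3 *
    (Finset.Iic ((3:ℕ),(1:ℕ))).sup (fun m => SchwartzMap.seminorm ℝ m.1 m.2) f with hD
  have hD0 : 0 ≤ D := by
    refine mul_nonneg (by norm_num) (apply_nonneg _ f)
  have hf0 : ∀ z : E3, (1 + ‖z‖) ^ 3 * ‖f z‖ ≤ D := by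
    intro z
    simpa [norm_iteratedFDeriv_zero] using
      SchwartzMap.one_add_le_sup_seminorm_apply (𝕜 := ℝ) (m := ((3:ℕ),(1:ℕ)))
        le_rfl (Nat.zero_le 1) f z
  have hf1 : ∀ z : E3, (1 + ‖z‖) ^ 3 * ‖fderiv ℝ (⇑f) z‖ ≤ D := by
    intro z
    have h := SchwartzMap.one_add_le_sup_seminorm_apply (𝕜 := ℝ) (m := ((3:ℕ),(1:ℕ)))
      le_rfl le_rfl f z
    rwa [show ‖iteratedFDeriv ℝ 1 (⇑f) z‖ = ‖fderiv ℝ (⇑f) z‖ by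
      rw [← norm_iteratedFDeriv_fderiv, norm_iteratedFDeriv_zero]] at h
  -- the majorant
  have hwint : IntegrableOn (fun r : ℝ => ((1 + r) ^ 2)⁻¹) (Ioi 0) := by
    have hder : ∀ r ∈ Ici (0:ℝ), HasDerivAt (fun s : ℝ => -(1 + s)⁻¹) (((1 + r) ^ 2)⁻¹) r := by
      intro r hr
      have h1 : (1:ℝ) + r ≠ 0 := by have : (0:ℝ) ≤ r := hr; positivity
      have h2 := ((hasDerivAt_id r).const_add 1).inv h1
      exact (by simpa [neg_div, one_div] using h2.neg :
        HasDerivAt (-(fun x : ℝ => 1 + x)⁻¹) (((1 + r) ^ 2)⁻¹) r)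
    refine integrableOn_Ioi_deriv_of_nonneg' (g' := fun r : ℝ => ((1 + r) ^ 2)⁻¹) hder
      (fun x hx => by have : (0:ℝ) < x := hx; positivity) (l := 0) ?_
    have h3 : Tendsto (fun r : ℝ => (1 + r)⁻¹) atTop (𝓝 0) :=
      tendsto_inv_atTop_zero.comp (tendsto_atTop_add_const_left _ 1 tendsto_id)
    simpa using h3.neg
  set B : ℝ := ∫ r in Ioi (0:ℝ), ((1 + r) ^ 2)⁻¹ with hB
  have hB0 : 0 ≤ B := integral_nonneg (fun r => by positivity)
  set σ : Measure (sphere (0:E3) 1) := (volume : Measure E3).toSphere with hσ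
  set S : ℝ := (σ univ).toReal with hS
  have hS0 : 0 ≤ S := ENNReal.toReal_nonneg
  refine ⟨D * B * S + 1, by positivity, fun l hl => ?_⟩
  have hexp : ∀ c : ℝ, ‖Complex.exp (Complex.I * l * c)‖ = 1 := by
    intro c
    rw [Complex.norm_exp]
    have : (Complex.I * l * c).re = 0 := by simp
    rw [this, Real.exp_zero]
  have hmaj : IntegrableOn (fun r : ℝ => D * ((1 + r) ^ 2)⁻¹) (Ioi 0) := hwint.const_mul D
  have hmajint : ∫ r in Ioi (0:ℝ), D * ((1 + r) ^ 2)⁻¹ = D * B := by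
    rw [integral_const_mul]
  -- per-direction data
  set φ : sphere (0:E3) 1 → ℝ → ℂ := fun ω r => (r:ℂ) * f (r • (ω:E3)) with hφdef
  set φ' : sphere (0:E3) 1 → ℝ → ℂ :=
    fun ω r => f (r • (ω:E3)) + (r:ℂ) * (fderiv ℝ (⇑f) (r • (ω:E3)) (ω:E3)) with hφ'def
  have hωn : ∀ ω : sphere (0:E3) 1, ‖(ω:E3)‖ = 1 := fun ω =>
    mem_sphere_zero_iff_norm.mp ω.2
  have hsn : ∀ (ω : sphere (0:E3) 1) (r : ℝ), 0 ≤ r → ‖r • (ω:E3)‖ = r := by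
    intro ω r hr
    rw [norm_smul, hωn, mul_one, Real.norm_eq_abs, _root_.abs_of_nonneg hr]
  have hder : ∀ (ω : sphere (0:E3) 1) (r : ℝ), HasDerivAt (φ ω) (φ' ω r) r := by
    intro ω r
    have hline : HasDerivAt (fun s : ℝ => s • (ω:E3)) (ω:E3) r := by
      simpa using (hasDerivAt_id r).smul_const (ω:E3)
    have hcomp : HasDerivAt (fun s : ℝ => f (s • (ω:E3)))
        (fderiv ℝ (⇑f) (r • (ω:E3)) (ω:E3)) r :=
      (f.differentiable.differentiableAt.hasFDerivAt).comp_hasDerivAt r hline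
    have hr : HasDerivAt (fun s : ℝ => (s:ℂ)) 1 r := by
      simpa using (hasDerivAt_id r).ofReal_comp
    exact (by simpa [hφ'def] using hr.mul hcomp :
      HasDerivAt ((fun s : ℝ => (s:ℂ)) * fun s => f (s • (ω:E3))) (φ' ω r) r)
  have hfc : ∀ ω : sphere (0:E3) 1, Continuous fun s : ℝ => f (s • (ω:E3)) := by
    intro ω
    exact f.continuous.comp (continuous_id.smul continuous_const)
  have hcont' : ∀ ω : sphere (0:E3) 1, Continuous (φ' ω) := by
    intro ω
    have h2 : Continuous (fderiv ℝ (⇑f)) := (f.smooth ⊤).continuous_fderiv (by simp)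
    exact (hfc ω).add (Complex.continuous_ofReal.mul
      (((h2.comp (continuous_id.smul continuous_const)).clm_apply continuous_const)))
  have hφcont : ∀ ω : sphere (0:E3) 1, Continuous (φ ω) := by
    intro ω
    exact Complex.continuous_ofReal.mul (hfc ω)
  -- pointwise bounds
  have hfb : ∀ (ω : sphere (0:E3) 1) (r : ℝ), 0 ≤ r → ‖f (r • (ω:E3))‖ ≤ D / (1 + r) ^ 3 := by
    intro ω r hr
    have h1r : (0:ℝ) < 1 + r := by linarith
    rw [le_div_iff₀ (by positivity), mul_comm]
    have := hf0 (r • (ω:E3))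
    rwa [hsn ω r hr] at this
  have hdfb : ∀ (ω : sphere (0:E3) 1) (r : ℝ), 0 ≤ r →
      ‖fderiv ℝ (⇑f) (r • (ω:E3)) (ω:E3)‖ ≤ D / (1 + r) ^ 3 := by
    intro ω r hr
    have h1r : (0:ℝ) < 1 + r := by linarith
    have h1 : ‖fderiv ℝ (⇑f) (r • (ω:E3)) (ω:E3)‖ ≤ ‖fderiv ℝ (⇑f) (r • (ω:E3))‖ := by
      simpa [hωn ω] using (fderiv ℝ (⇑f) (r • (ω:E3))).le_opNorm (ω:E3)
    refine h1.trans ?_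
    rw [le_div_iff₀ (by positivity), mul_comm]
    have := hf1 (r • (ω:E3))
    rwa [hsn ω r hr] at this
  have hφ'b : ∀ (ω : sphere (0:E3) 1), ∀ r ∈ Ioi (0:ℝ), ‖φ' ω r‖ ≤ D * ((1 + r) ^ 2)⁻¹ := by
    intro ω r hr
    have hr0 : (0:ℝ) ≤ r := le_of_lt hr
    have h1r : (0:ℝ) < 1 + r := by linarith
    have e3 : ‖(r:ℂ) * (fderiv ℝ (⇑f) (r • (ω:E3)) (ω:E3))‖
        = r * ‖fderiv ℝ (⇑f) (r • (ω:E3)) (ω:E3)‖ := by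
      rw [norm_mul, Complex.norm_real, Real.norm_eq_abs, _root_.abs_of_nonneg hr0]
    calc ‖φ' ω r‖ ≤ ‖f (r • (ω:E3))‖ + ‖(r:ℂ) * (fderiv ℝ (⇑f) (r • (ω:E3)) (ω:E3))‖ :=
          norm_add_le _ _
      _ ≤ D / (1 + r) ^ 3 + r * (D / (1 + r) ^ 3) := by
          rw [e3]
          exact add_le_add (hfb ω r hr0) (mul_le_mul_of_nonneg_left (hdfb ω r hr0) hr0)
      _ = D * ((1 + r) ^ 2)⁻¹ := by field_simp
  have hφn : ∀ (ω : sphere (0:E3) 1), ∀ r ∈ Ioi (0:ℝ),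
      ‖Complex.exp (Complex.I * l * r) * φ ω r‖ = r * ‖f (r • (ω:E3))‖ := by
    intro ω r hr
    rw [norm_mul, hexp, one_mul, hφdef]
    simp only []
    rw [norm_mul, Complex.norm_real, Real.norm_eq_abs, _root_.abs_of_nonneg (le_of_lt hr)]
  have hφb : ∀ (ω : sphere (0:E3) 1), ∀ r ∈ Ioi (0:ℝ),
      ‖Complex.exp (Complex.I * l * r) * φ ω r‖ ≤ D * ((1 + r) ^ 2)⁻¹ := by
    intro ω r hr
    have hr0 : (0:ℝ) ≤ r := le_of_lt hr
    have h1r : (0:ℝ) < 1 + r := by linarith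
    rw [hφn ω r hr]
    calc r * ‖f (r • (ω:E3))‖ ≤ r * (D / (1 + r) ^ 3) :=
          mul_le_mul_of_nonneg_left (hfb ω r hr0) hr0
      _ ≤ (1 + r) * (D / (1 + r) ^ 3) := by gcongr; linarith
      _ = D * ((1 + r) ^ 2)⁻¹ := by field_simp
  -- integrability on the ray
  have hintφ : ∀ ω : sphere (0:E3) 1,
      IntegrableOn (fun r : ℝ => Complex.exp (Complex.I * l * r) * φ ω r) (Ioi 0) := by
    intro ω
    refine Integrable.mono' hmaj ?_ ?_
    · have hec : Continuous fun r : ℝ => Complex.exp (Complex.I * l * r) :=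
        Complex.continuous_exp.comp (continuous_const.mul Complex.continuous_ofReal)
      exact (hec.mul (hφcont ω)).aestronglyMeasurable.restrict
    · filter_upwards [ae_restrict_mem measurableSet_Ioi] with r hr
      exact hφb ω r hr
  have hintφ' : ∀ ω : sphere (0:E3) 1, IntegrableOn (φ' ω) (Ioi 0) := by
    intro ω
    refine Integrable.mono' hmaj (hcont' ω).aestronglyMeasurable.restrict ?_
    filter_upwards [ae_restrict_mem measurableSet_Ioi] with r hr
    exact hφ'b ω r hr
  have hintnorm : ∀ ω : sphere (0:E3) 1,
      ∫ r in Ioi (0:ℝ), ‖φ' ω r‖ ≤ D * B := by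
    intro ω
    calc ∫ r in Ioi (0:ℝ), ‖φ' ω r‖ ≤ ∫ r in Ioi (0:ℝ), D * ((1 + r) ^ 2)⁻¹ :=
          setIntegral_mono_on (hintφ' ω).norm hmaj measurableSet_Ioi (hφ'b ω)
      _ = D * B := hmajint
  have hlimφ : ∀ ω : sphere (0:E3) 1, Tendsto (φ ω) atTop (𝓝 0) := by
    intro ω
    have hg : Tendsto (fun r : ℝ => D * (1 + r)⁻¹) atTop (𝓝 0) := by
      have h3 : Tendsto (fun r : ℝ => (1 + r)⁻¹) atTop (𝓝 0) :=
        tendsto_inv_atTop_zero.comp (tendsto_atTop_add_const_left _ 1 tendsto_id)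
      simpa using h3.const_mul D
    refine squeeze_zero_norm' ?_ hg
    filter_upwards [eventually_ge_atTop (0:ℝ)] with r hr0
    have h1r : (0:ℝ) < 1 + r := by linarith
    have e : ‖φ ω r‖ = r * ‖f (r • (ω:E3))‖ := by
      rw [hφdef]
      simp only []
      rw [norm_mul, Complex.norm_real, Real.norm_eq_abs, _root_.abs_of_nonneg hr0]
    rw [e]
    calc r * ‖f (r • (ω:E3))‖ ≤ r * (D / (1 + r) ^ 3) :=
          mul_le_mul_of_nonneg_left (hfb ω r hr0) hr0
      _ ≤ (1 + r) * (D / (1 + r) ^ 3) := by gcongr; linarith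
      _ = D * ((1 + r) ^ 2)⁻¹ := by field_simp
      _ ≤ D * (1 + r)⁻¹ := by
          gcongr
          · rw [pow_two]
            nlinarith
  -- the two per-direction bounds
  have hone : ∀ ω : sphere (0:E3) 1,
      ‖∫ r in Ioi (0:ℝ), Complex.exp (Complex.I * l * r) * φ ω r‖ ≤ (1/l) * (D * B) := by
    intro ω
    have h0 : φ ω 0 = 0 := by simp [hφdef]
    refine (oneD_bound hl (φ ω) (φ' ω) (hder ω) h0 (hcont' ω) (hintφ ω) (hintφ' ω)
      (hintφ' ω).norm (hlimφ ω)).trans ?_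
    exact mul_le_mul_of_nonneg_left (hintnorm ω) (by positivity)
  have hzero : ∀ ω : sphere (0:E3) 1,
      ‖∫ r in Ioi (0:ℝ), Complex.exp (Complex.I * l * r) * φ ω r‖ ≤ D * B := by
    intro ω
    calc ‖∫ r in Ioi (0:ℝ), Complex.exp (Complex.I * l * r) * φ ω r‖
        ≤ ∫ r in Ioi (0:ℝ), ‖Complex.exp (Complex.I * l * r) * φ ω r‖ :=
          norm_integral_le_integral_norm _
      _ ≤ ∫ r in Ioi (0:ℝ), D * ((1 + r) ^ 2)⁻¹ :=
          setIntegral_mono_on (hintφ ω).norm hmaj measurableSet_Ioi (hφb ω)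
      _ = D * B := hmajint
  -- product-side function
  set G : sphere (0:E3) 1 × Ioi (0:ℝ) → ℂ :=
    fun p => Complex.exp (Complex.I * l * p.2.1) * f (p.2.1 • (p.1:E3)) / (p.2.1:ℂ) with hG
  have hGcont : Continuous G := by
    have hc2 : Continuous fun p : sphere (0:E3) 1 × Ioi (0:ℝ) => (p.2.1:ℝ) :=
      continuous_subtype_val.comp continuous_snd
    have hc1 : Continuous fun p : sphere (0:E3) 1 × Ioi (0:ℝ) => (p.1:E3) :=
      continuous_subtype_val.comp continuous_fst
    refine Continuous.div ?_ (Complex.continuous_ofReal.comp hc2) ?_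
    · exact (Complex.continuous_exp.comp
        (continuous_const.mul (Complex.continuous_ofReal.comp hc2))).mul
        (f.continuous.comp (hc2.smul hc1))
    · intro p
      exact Complex.ofReal_ne_zero.mpr (ne_of_gt p.2.2)
  -- relation between G and φ on the ray
  have hrel : ∀ (ω : sphere (0:E3) 1), ∀ r ∈ Ioi (0:ℝ),
      (r ^ 2) • (Complex.exp (Complex.I * l * r) * f (r • (ω:E3)) / (r:ℂ)) =
        Complex.exp (Complex.I * l * r) * φ ω r := by
    intro ω r hr
    have hrne : (r:ℂ) ≠ 0 := Complex.ofReal_ne_zero.mpr (ne_of_gt hr)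
    rw [hφdef]
    simp only []
    rw [Complex.real_smul]
    push_cast
    field_simp
  have hfiber : ∀ ω : sphere (0:E3) 1,
      Integrable (fun r : Ioi (0:ℝ) => G (ω, r)) (volumeIoiPow 2) := by
    intro ω
    refine (volumeIoiPow_integrable_iff 2
      (fun r : ℝ => Complex.exp (Complex.I * l * r) * f (r • (ω:E3)) / (r:ℂ))).mpr ?_
    refine (hintφ ω).congr_fun ?_ measurableSet_Ioi
    intro r hr
    show Complex.exp (Complex.I * l * r) * φ ω r =
      (Real.toNNReal (r ^ 2)) • (Complex.exp (Complex.I * l * r) * f (r • (ω:E3)) / (r:ℂ))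
    rw [← hrel ω r hr, NNReal.smul_def, Real.coe_toNNReal _ (by positivity)]
  have hGnorm : ∀ ω : sphere (0:E3) 1,
      ∫ r : Ioi (0:ℝ), ‖G (ω, r)‖ ∂(volumeIoiPow 2) ≤ D * B := by
    intro ω
    refine le_trans (le_of_eq (volumeIoiPow_integral 2
      (fun r : ℝ => ‖Complex.exp (Complex.I * l * r) * f (r • (ω:E3)) / (r:ℂ)‖))) ?_
    have h2 : ∫ r in Ioi (0:ℝ), (r ^ 2) •
        ‖Complex.exp (Complex.I * l * r) * f (r • (ω:E3)) / (r:ℂ)‖ =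
        ∫ r in Ioi (0:ℝ), ‖Complex.exp (Complex.I * l * r) * φ ω r‖ := by
      refine setIntegral_congr_fun measurableSet_Ioi (fun r hr => ?_)
      have hrne : (r:ℝ) ≠ 0 := ne_of_gt hr
      rw [smul_eq_mul, norm_div, norm_mul, hexp, one_mul, hφn ω r hr,
        Complex.norm_real, Real.norm_eq_abs, _root_.abs_of_nonneg (le_of_lt hr)]
      field_simp
    rw [h2]
    calc ∫ r in Ioi (0:ℝ), ‖Complex.exp (Complex.I * l * r) * φ ω r‖
        ≤ ∫ r in Ioi (0:ℝ), D * ((1 + r) ^ 2)⁻¹ :=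
          setIntegral_mono_on (hintφ ω).norm hmaj measurableSet_Ioi (hφb ω)
      _ = D * B := hmajint
  haveI : IsFiniteMeasure σ := hσ ▸ inferInstanceAs
    (IsFiniteMeasure ((volume : Measure E3).toSphere))
  have hGint : Integrable G (σ.prod (volumeIoiPow 2)) := by
    rw [integrable_prod_iff hGcont.aestronglyMeasurable]
    constructor
    · exact Eventually.of_forall hfiber
    · refine Integrable.mono' (integrable_const (D * B))
        (hGcont.norm.aestronglyMeasurable.integral_prod_right') ?_
      refine Eventually.of_forall fun ω => ?_
      rw [Real.norm_eq_abs, _root_.abs_of_nonneg (integral_nonneg fun r => norm_nonneg _)]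
      exact hGnorm ω
  have hpolar : (∫ y : E3, Complex.exp (Complex.I * l * ‖y‖) * f y / (‖y‖ : ℂ)) =
      ∫ p : sphere (0:E3) 1 × Ioi (0:ℝ), G p ∂(σ.prod (volumeIoiPow 2)) := by
    have h0 := polar_integral (volume : Measure E3)
      (fun y : E3 => Complex.exp (Complex.I * l * ‖y‖) * f y / (‖y‖ : ℂ))
    rw [show Module.finrank ℝ E3 - 1 = 2 by simp [finrank_euclideanSpace_fin]] at h0
    rw [hσ]
    refine h0.trans ?_
    refine integral_congr_ae (Eventually.of_forall fun p => ?_)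
    have hns : ‖(p.2.1 : ℝ) • (p.1 : E3)‖ = p.2.1 := hsn p.1 p.2.1 (le_of_lt p.2.2)
    rw [hG]
    simp only []
    rw [hns]
  have hinner : ∀ ω : sphere (0:E3) 1, ∫ r : Ioi (0:ℝ), G (ω, r) ∂(volumeIoiPow 2) =
      ∫ r in Ioi (0:ℝ), Complex.exp (Complex.I * l * r) * φ ω r := by
    intro ω
    refine Eq.trans (volumeIoiPow_integral 2
      (fun r : ℝ => Complex.exp (Complex.I * l * r) * f (r • (ω:E3)) / (r:ℂ))) ?_
    exact setIntegral_congr_fun measurableSet_Ioi (hrel ω)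
  have hiter : (∫ y : E3, Complex.exp (Complex.I * l * ‖y‖) * f y / (‖y‖ : ℂ)) =
      ∫ ω : sphere (0:E3) 1,
        (∫ r in Ioi (0:ℝ), Complex.exp (Complex.I * l * r) * φ ω r) ∂σ := by
    rw [hpolar, integral_prod G hGint]
    exact integral_congr_ae (Eventually.of_forall fun ω => hinner ω)
  constructor
  · rw [hiter]
    have h3 := norm_integral_le_of_norm_le_const (μ := σ) (C := D * B)
      (Eventually.of_forall hzero)
    refine h3.trans ?_
    rw [measureReal_def, ← hS]
    nlinarith [mul_nonneg (mul_nonneg hD0 hB0) hS0]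
  · rw [hiter]
    have h3 := norm_integral_le_of_norm_le_const (μ := σ) (C := (1/l) * (D * B))
      (Eventually.of_forall hone)
    have h4 : l * ‖∫ ω : sphere (0:E3) 1,
        (∫ r in Ioi (0:ℝ), Complex.exp (Complex.I * l * r) * φ ω r) ∂σ‖ ≤
        l * ((1/l) * (D * B) * (σ univ).toReal) :=
      mul_le_mul_of_nonneg_left h3 (le_of_lt hl)
    refine h4.trans ?_
    rw [← hS]
    have : l * ((1/l) * (D * B) * S) = D * B * S := by
      field_simp
    rw [this]
    linarith

/-- If `f` is Schwartz on `ℝ³`, then `F₋₁(x,t) := ∫ e^{i|x||y|/(2t)} f(y)/|y| d³y = 𝒪(1)`: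
there are `C, R₀, T₀ > 0` such that `(|x|/t)^q |F₋₁(x,t)| ≤ C` for all `|x| ≥ R₀`,
`t ≥ T₀` and `0 ≤ q ≤ 1`. -/
theorem schwartz_radial_oscillatory_integral_O_one
    (f : SchwartzMap (EuclideanSpace ℝ (Fin 3)) ℂ) :
    ∃ C > 0, ∃ R₀ > 0, ∃ T₀ > 0,
      ∀ x : EuclideanSpace ℝ (Fin 3), R₀ ≤ ‖x‖ → ∀ t : ℝ, T₀ ≤ t → ∀ q : ℕ, q ≤ 1 →
        (‖x‖ / t) ^ q *
          ‖∫ y : EuclideanSpace ℝ (Fin 3),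
              Complex.exp (Complex.I * ‖x‖ * ‖y‖ / (2 * t)) * f y / (‖y‖ : ℂ)‖ ≤ C := by
  obtain ⟨M, hM0, hM⟩ := schwartz_polar_bound f
  refine ⟨2 * M, by linarith, 1, one_pos, 1, one_pos, ?_⟩
  intro x hx t ht q hq
  have ht0 : (0:ℝ) < t := lt_of_lt_of_le one_pos ht
  have hx0 : (0:ℝ) < ‖x‖ := lt_of_lt_of_le one_pos hx
  set l : ℝ := ‖x‖ / (2 * t) with hldef
  have hl : 0 < l := by positivity
  have htne : (t:ℂ) ≠ 0 := Complex.ofReal_ne_zero.mpr ht0.ne'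
  have hIeq : (∫ y : EuclideanSpace ℝ (Fin 3),
      Complex.exp (Complex.I * ‖x‖ * ‖y‖ / (2 * t)) * f y / (‖y‖ : ℂ)) =
      ∫ y : EuclideanSpace ℝ (Fin 3),
        Complex.exp (Complex.I * l * ‖y‖) * f y / (‖y‖ : ℂ) := by
    refine integral_congr_ae (Filter.Eventually.of_forall fun y => ?_)
    have : (Complex.I * ‖x‖ * ‖y‖ / (2 * t) : ℂ) = Complex.I * l * ‖y‖ := by
      rw [hldef]
      push_cast
      field_simp
    simp only [this]
  rw [hIeq]
  obtain ⟨h1, h2⟩ := hM l hl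
  interval_cases q
  · rw [pow_zero, one_mul]
    linarith
  · have hxt : ‖x‖ / t = 2 * l := by
      rw [hldef]
      field_simp
    rw [pow_one, hxt, mul_assoc]
    linarith
end

section
/- Let ψ ∈ 𝒮(ℝ³) with spherical average Ψ(k) := ∫_{S²} ψ(k ω) dΩ(ω), and suppose Ψ(0) = 0 (equivalently ψ(0) = 0). Then there is C such that for all t ≥ 1 and k-integral b₁(x,t) := (1/|x|) ∫₀^∞ e^{−ik²t − i|x|k} k Ψ(k) dk satisfies sup_{|x|=R} |b₁(x,t)| ≤ C/(R(R+t)) for all R > 0, t ≥ 1. -/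
open MeasureTheory

local notation "E3" => EuclideanSpace ℝ (Fin 3)

noncomputable section

namespace B1Aux

open Set Filter Complex Topology

lemma schwartz_bounds (ψ : SchwartzMap E3 ℂ) (hψ : ψ 0 = 0) :
    ∃ A > (0:ℝ), ∃ B > (0:ℝ), ∃ L > (0:ℝ),
      (∀ y : E3, (1 + ‖y‖^3) * ‖ψ y‖ ≤ A) ∧
      (∀ y : E3, (1 + ‖y‖^3) * ‖fderiv ℝ ψ y‖ ≤ B) ∧
      (∀ y : E3, ‖ψ y‖ ≤ L * ‖y‖) ∧ (∀ y : E3, ‖fderiv ℝ ψ y‖ ≤ L) := by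
  obtain ⟨A₀, hA₀pos, hA₀⟩ := ψ.decay 0 0
  obtain ⟨A₃, hA₃pos, hA₃⟩ := ψ.decay 3 0
  set Φ := SchwartzMap.fderivCLM ℝ E3 ℂ ψ with hΦ
  obtain ⟨B₀, hB₀pos, hB₀⟩ := Φ.decay 0 0
  obtain ⟨B₃, hB₃pos, hB₃⟩ := Φ.decay 3 0
  have hΦa : ∀ y : E3, ‖fderiv ℝ ψ y‖ = ‖Φ y‖ := by
    intro y; rw [hΦ, SchwartzMap.fderivCLM_apply]
  have hψ0 : ∀ y : E3, ‖ψ y‖ ≤ A₀ := by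
    intro y; simpa [norm_iteratedFDeriv_zero] using hA₀ y
  have hψ3 : ∀ y : E3, ‖y‖^3 * ‖ψ y‖ ≤ A₃ := by
    intro y; simpa [norm_iteratedFDeriv_zero] using hA₃ y
  have hf0 : ∀ y : E3, ‖fderiv ℝ ψ y‖ ≤ B₀ := by
    intro y; rw [hΦa]; simpa [norm_iteratedFDeriv_zero] using hB₀ y
  have hf3 : ∀ y : E3, ‖y‖^3 * ‖fderiv ℝ ψ y‖ ≤ B₃ := by
    intro y; rw [hΦa]; simpa [norm_iteratedFDeriv_zero] using hB₃ y
  refine ⟨A₀ + A₃, by positivity, B₀ + B₃, by positivity, B₀, hB₀pos, ?_, ?_, ?_, hf0⟩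
  · intro y
    have := hψ0 y; have := hψ3 y; nlinarith [norm_nonneg (ψ y), norm_nonneg y]
  · intro y
    have := hf0 y; have := hf3 y
    nlinarith [norm_nonneg (fderiv ℝ ψ y), norm_nonneg y]
  · intro y
    have h := convex_univ.norm_image_sub_le_of_norm_fderiv_le (𝕜 := ℝ) (f := ⇑ψ) (s := Set.univ)
      (fun x _ => ψ.differentiableAt) (fun x _ => hf0 x) (Set.mem_univ 0)
      (Set.mem_univ y)
    simpa [hψ] using h


set_option maxHeartbeats 1000000 in
lemma keyineq {A B L t r k s s' : ℝ} (hA : 0 ≤ A) (hB : 0 ≤ B) (hL : 0 ≤ L)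
    (ht : 1 ≤ t) (hr : 0 < r) (hk : 0 < k)
    (hs1 : s ≤ A / (1 + k^3)) (hs2 : s ≤ L * k)
    (hp1 : s' ≤ B / (1 + k^3)) (hp2 : s' ≤ L)
    (hsnn : 0 ≤ s) (hs'nn : 0 ≤ s') :
    ((s + k * s') * (2*t*k + r) + k * s * (2*t)) / (2*t*k + r)^2
      ≤ (3*L + 5*A + 2*B) / ((t + r) * (1 + k^2)) := by
  set T := t + r with hT
  set d := 2*t*k + r with hd
  have hTpos : 0 < T := by dsimp only [T]; linarith
  have ht' : t ≤ T := by dsimp only [T]; linarith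
  have hdpos : 0 < d := by dsimp only [d]; nlinarith
  have hk2 : (0:ℝ) < 1 + k^2 := by positivity
  have hk3 : (0:ℝ) < 1 + k^3 := by positivity
  have split : ((s + k * s') * d + k * s * (2*t)) / d^2
      = (s + k * s') / d + (2*t*k*s) / d^2 := by
    field_simp
  rw [split]
  rcases le_or_gt k (1/2) with hhalf | hhalf
  · -- small k
    have hd1 : 2*k*T ≤ d := by dsimp only [d, T]; nlinarith
    clear_value T d
    have t1 : (s + k * s') / d ≤ (2*L*k) / (2*k*T) := by
      apply div_le_div₀ (by positivity) (by nlinarith) (by positivity) hd1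
    have t2 : (2*t*k*s) / d^2 ≤ (2*T*k*(L*k)) / (2*k*T)^2 := by
      apply div_le_div₀ (by positivity) ?_ (by positivity) (pow_le_pow_left₀ (by positivity) hd1 2)
      have h1 : t*(k*s) ≤ T*(k*s) :=
        mul_le_mul_of_nonneg_right ht' (mul_nonneg hk.le hsnn)
      have h2 : (2*T)*(k*s) ≤ (2*T)*(k*(L*k)) :=
        mul_le_mul_of_nonneg_left (mul_le_mul_of_nonneg_left hs2 hk.le) (by positivity)
      nlinarith
    have e1 : (2*L*k) / (2*k*T) = L / T := by
      rw [div_eq_div_iff (by positivity) (by positivity)]; ring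
    have e2 : (2*T*k*(L*k)) / (2*k*T)^2 = L / (2*T) := by
      rw [div_eq_div_iff (by positivity) (by positivity)]; ring
    have e3 : L/T + L/(2*T) = 3*L/(2*T) := by field_simp; ring
    have hsum : (s + k * s') / d + (2*t*k*s) / d^2 ≤ 3*L/(2*T) := by
      rw [e1] at t1; rw [e2] at t2; linarith
    refine hsum.trans ?_
    rw [div_le_div_iff₀ (by positivity) (by positivity)]
    have hk1 : k^2 ≤ 1 := by nlinarith
    have h3 : L*T*k^2 ≤ L*T*1 :=
      mul_le_mul_of_nonneg_left hk1 (by positivity)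
    nlinarith [mul_nonneg hA hTpos.le, mul_nonneg hB hTpos.le]
  · -- large k
    have hd1 : T ≤ d := by dsimp only [d, T]; nlinarith
    clear_value T d
    have t1 : (s + k * s') / d ≤ (A/(1+k^3) + k*(B/(1+k^3))) / T := by
      apply div_le_div₀ (by positivity) ?_ hTpos hd1
      have : k * s' ≤ k * (B/(1+k^3)) := mul_le_mul_of_nonneg_left hp1 hk.le
      linarith
    have t2 : (2*t*k*s) / d^2 ≤ (2*k*(A/(1+k^3))) / T := by
      have t2a : (2*t*k*s) / d^2 ≤ (2*T*k*(A/(1+k^3))) / T^2 := by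
        apply div_le_div₀ (by positivity) ?_ (by positivity) (pow_le_pow_left₀ hTpos.le hd1 2)
        have h1 : t*(k*s) ≤ T*(k*s) :=
          mul_le_mul_of_nonneg_right ht' (mul_nonneg hk.le hsnn)
        have h2 : (2*T)*(k*s) ≤ (2*T)*(k*(A/(1+k^3))) :=
          mul_le_mul_of_nonneg_left (mul_le_mul_of_nonneg_left hs1 hk.le) (by positivity)
        nlinarith
      refine t2a.trans_eq ?_
      rw [div_eq_div_iff (by positivity) (by positivity)]; ring
    have e : (A/(1+k^3) + k*(B/(1+k^3)))/T + (2*k*(A/(1+k^3)))/T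
        = ((1+2*k)*A + k*B)/((1+k^3)*T) := by
      field_simp; ring
    have hsum : (s + k * s') / d + (2*t*k*s) / d^2 ≤ ((1+2*k)*A + k*B)/((1+k^3)*T) := by
      rw [← e]; exact add_le_add t1 t2
    refine hsum.trans ?_
    rw [div_le_div_iff₀ (by positivity) (by positivity)]
    have h1 : (1+2*k)*(1+k^2) ≤ 5*(1+k^3) := by nlinarith [mul_nonneg hk.le (sq_nonneg (k-1)), sq_nonneg (k - 1/2)]
    have h2 : k*(1+k^2) ≤ 2*(1+k^3) := by nlinarith [mul_nonneg hk.le (sq_nonneg (k-1)), sq_nonneg (k-1)]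
    have hN : ((1+2*k)*A + k*B)*(1+k^2) ≤ (3*L + 5*A + 2*B)*(1+k^3) := by
      nlinarith [mul_le_mul_of_nonneg_left h1 hA, mul_le_mul_of_nonneg_left h2 hB,
        mul_nonneg hL hk3.le]
    nlinarith [mul_le_mul_of_nonneg_right hN hTpos.le]


set_option maxHeartbeats 1000000 in
lemma core (ψ : SchwartzMap E3 ℂ) (hψ : ψ 0 = 0) :
    ∃ D > (0:ℝ), ∀ (t r : ℝ), 1 ≤ t → 0 < r → ∀ v : E3, ‖v‖ = 1 →
      ‖∫ k in Set.Ioi (0:ℝ),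
          Complex.exp (-Complex.I * (k:ℂ)^2 * (t:ℂ) - Complex.I * (r:ℂ) * (k:ℂ)) * (k:ℂ) * ψ (k • v)‖
        ≤ D / (t + r) := by
  obtain ⟨A, hA, B, hB, L, hL, hSA, hSB, hLip, hLf⟩ := schwartz_bounds ψ hψ
  refine ⟨2*(3*L + 5*A + 2*B) + 1, by positivity, ?_⟩
  intro t r ht hr v hv
  have hTpos : (0:ℝ) < t + r := by linarith
  set E : ℝ → ℂ := fun k => Complex.exp (-Complex.I * (k:ℂ)^2 * (t:ℂ) - Complex.I * (r:ℂ) * (k:ℂ)) with hEdef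
  set G : ℝ → ℂ := fun k => Complex.I * (k:ℂ) * ψ (k • v) / ((2*t*k + r : ℝ) : ℂ) with hGdef
  set G' : ℝ → ℂ := fun k =>
    ((Complex.I * ψ (k • v) + Complex.I * (k:ℂ) * (fderiv ℝ ψ (k • v) v)) * ((2*t*k + r : ℝ) : ℂ)
      - Complex.I * (k:ℂ) * ψ (k • v) * ((2*t : ℝ) : ℂ)) / ((2*t*k + r : ℝ) : ℂ)^2 with hG'def
  have hdpos : ∀ k : ℝ, 0 ≤ k → (0:ℝ) < 2*t*k + r := by intro k hk; nlinarith
  have hdne : ∀ k : ℝ, 0 ≤ k → ((2*t*k + r : ℝ) : ℂ) ≠ 0 := by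
    intro k hk; exact_mod_cast (hdpos k hk).ne'
  have hkv : ∀ k : ℝ, 0 ≤ k → ‖k • v‖ = k := by
    intro k hk; rw [norm_smul, hv, mul_one, Real.norm_eq_abs, _root_.abs_of_nonneg hk]
  have hpsi1 : ∀ k : ℝ, 0 ≤ k → ‖ψ (k • v)‖ ≤ A / (1 + k^3) := by
    intro k hk
    rw [le_div_iff₀ (by positivity)]
    have := hSA (k • v); rw [hkv k hk] at this; linarith
  have hpsi2 : ∀ k : ℝ, 0 ≤ k → ‖ψ (k • v)‖ ≤ L * k := by
    intro k hk; have := hLip (k • v); rwa [hkv k hk] at this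
  have hder1 : ∀ k : ℝ, 0 ≤ k → ‖fderiv ℝ ψ (k • v) v‖ ≤ B / (1 + k^3) := by
    intro k hk
    have h1 : ‖fderiv ℝ ψ (k • v) v‖ ≤ ‖fderiv ℝ ψ (k • v)‖ := by
      simpa [hv] using (fderiv ℝ ψ (k • v)).le_opNorm v
    refine h1.trans ?_
    rw [le_div_iff₀ (by positivity)]
    have := hSB (k • v); rw [hkv k hk] at this; linarith
  have hder2 : ∀ k : ℝ, 0 ≤ k → ‖fderiv ℝ ψ (k • v) v‖ ≤ L := by
    intro k hk
    have h1 : ‖fderiv ℝ ψ (k • v) v‖ ≤ ‖fderiv ℝ ψ (k • v)‖ := by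
      simpa [hv] using (fderiv ℝ ψ (k • v)).le_opNorm v
    exact h1.trans (hLf _)
  have hE1 : ∀ k : ℝ, ‖E k‖ = 1 := by
    intro k
    simp only [hEdef]
    have hre : (-Complex.I * (k:ℂ)^2 * (t:ℂ) - Complex.I * (r:ℂ) * (k:ℂ)).re = 0 := by
      simp [Complex.mul_re, Complex.mul_im, pow_two]
    rw [Complex.norm_exp, hre, Real.exp_zero]
  -- derivatives
  have hhd : ∀ k : ℝ, HasDerivAt (fun k : ℝ => (ψ (k • v) : ℂ)) (fderiv ℝ ψ (k • v) v) k := by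
    intro k
    have h1 : HasDerivAt (fun k : ℝ => k • v) ((1:ℝ) • v) k := (hasDerivAt_id k).smul_const v
    have h2 := ((ψ.differentiable (k • v)).hasFDerivAt).comp_hasDerivAt k h1
    rw [one_smul] at h2; exact h2
  have hEd : ∀ k : ℝ, HasDerivAt E (E k * (-Complex.I * ((2*t*k + r : ℝ) : ℂ))) k := by
    intro k
    have hw : HasDerivAt (fun z : ℂ => -Complex.I * z^2 * (t:ℂ) - Complex.I * (r:ℂ) * z)
        (-Complex.I * (2*(k:ℂ)) * t - Complex.I * r) (k:ℂ) := by
      have h1 := (((hasDerivAt_pow 2 (k:ℂ)).const_mul (-Complex.I)).mul_const (t:ℂ)).sub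
        ((hasDerivAt_id (k:ℂ)).const_mul (Complex.I * (r:ℂ)))
      refine h1.congr_deriv ?_
      push_cast; ring
    have h2 := (hw.comp_ofReal).cexp
    convert h2 using 1
    push_cast; ring
  have hGd : ∀ k : ℝ, 0 < k → HasDerivAt G (G' k) k := by
    intro k hk
    have hIk : HasDerivAt (fun k : ℝ => Complex.I * (k:ℂ)) Complex.I k := by
      have := ((hasDerivAt_id (k:ℂ)).const_mul Complex.I).comp_ofReal
      simpa using this
    have hN := hIk.mul (hhd k)
    have hden : HasDerivAt (fun k : ℝ => ((2*t*k + r : ℝ) : ℂ)) ((2*t : ℝ) : ℂ) k := by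
      have h0 : HasDerivAt (fun k : ℝ => 2*t*k + r) (2*t) k := by
        simpa using ((hasDerivAt_id k).const_mul (2*t)).add_const r
      exact h0.ofReal_comp
    exact hN.div hden (hdne k hk.le)
  have hPd : ∀ k ∈ Set.Ioi (0:ℝ), HasDerivAt (fun k => E k * G k)
      (E k * ((k:ℂ) * ψ (k • v)) + E k * G' k) k := by
    intro k hk
    have hk' : (0:ℝ) < k := hk
    have h := (hEd k).mul (hGd k hk')
    have e2 : (-Complex.I * ((2*t*k + r : ℝ) : ℂ))
        * (Complex.I * (k:ℂ) * ψ (k • v) / ((2*t*k + r : ℝ) : ℂ)) = (k:ℂ) * ψ (k • v) := by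
      have hne := hdne k hk'.le
      push_cast at hne ⊢
      field_simp [hne]
      linear_combination (-((k:ℂ) * ψ (k • v))) * Complex.I_sq
    have e : E k * (-Complex.I * ((2*t*k + r : ℝ) : ℂ)) * G k = E k * ((k:ℂ) * ψ (k • v)) := by
      simp only [hGdef]
      rw [mul_assoc, e2]
    rw [e] at h
    exact h
  -- pointwise bound for G'
  have hG'bound : ∀ k : ℝ, 0 < k → ‖G' k‖ ≤ (3*L + 5*A + 2*B) / ((t + r) * (1 + k^2)) := by
    intro k hk
    have hdk := hdpos k hk.le
    have h2t : (0:ℝ) < 2*t := by linarith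
    have enorm1 : ‖((2*t*k + r : ℝ) : ℂ)‖ = 2*t*k + r := by
      rw [Complex.norm_real, Real.norm_eq_abs, _root_.abs_of_nonneg hdk.le]
    have enorm2 : ‖((2*t : ℝ) : ℂ)‖ = 2*t := by
      rw [Complex.norm_real, Real.norm_eq_abs, _root_.abs_of_nonneg h2t.le]
    have enormk : ‖((k : ℝ) : ℂ)‖ = k := by
      rw [Complex.norm_real, Real.norm_eq_abs, _root_.abs_of_nonneg hk.le]
    have eG' : ‖G' k‖
        = ‖(Complex.I * ψ (k • v) + Complex.I * (k:ℂ) * (fderiv ℝ ψ (k • v) v))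
              * ((2*t*k + r : ℝ) : ℂ)
            - Complex.I * (k:ℂ) * ψ (k • v) * ((2*t : ℝ) : ℂ)‖ / (2*t*k + r)^2 := by
      simp only [hG'def]
      rw [norm_div, norm_pow, enorm1]
    have hb1 : ‖Complex.I * ψ (k • v) + Complex.I * (k:ℂ) * (fderiv ℝ ψ (k • v) v)‖
        ≤ ‖ψ (k • v)‖ + k * ‖(fderiv ℝ ψ (k • v)) v‖ := by
      refine (norm_add_le _ _).trans ?_
      rw [norm_mul, norm_mul, norm_mul, Complex.norm_I, one_mul, one_mul, enormk]
    have hnum : ‖(Complex.I * ψ (k • v) + Complex.I * (k:ℂ) * (fderiv ℝ ψ (k • v) v))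
              * ((2*t*k + r : ℝ) : ℂ)
            - Complex.I * (k:ℂ) * ψ (k • v) * ((2*t : ℝ) : ℂ)‖
        ≤ (‖ψ (k • v)‖ + k * ‖(fderiv ℝ ψ (k • v)) v‖) * (2*t*k + r)
            + k * ‖ψ (k • v)‖ * (2*t) := by
      refine (norm_sub_le _ _).trans ?_
      have t1 : ‖(Complex.I * ψ (k • v) + Complex.I * (k:ℂ) * (fderiv ℝ ψ (k • v) v))
          * ((2*t*k + r : ℝ) : ℂ)‖
          ≤ (‖ψ (k • v)‖ + k * ‖(fderiv ℝ ψ (k • v)) v‖) * (2*t*k + r) := by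
        rw [norm_mul, enorm1]
        exact mul_le_mul_of_nonneg_right hb1 hdk.le
      have t2 : ‖Complex.I * (k:ℂ) * ψ (k • v) * ((2*t : ℝ) : ℂ)‖
          = k * ‖ψ (k • v)‖ * (2*t) := by
        rw [norm_mul, norm_mul, norm_mul, Complex.norm_I, one_mul, enormk, enorm2]
      rw [t2]
      exact add_le_add t1 le_rfl
    rw [eG']
    have step : ‖(Complex.I * ψ (k • v) + Complex.I * (k:ℂ) * (fderiv ℝ ψ (k • v) v))
              * ((2*t*k + r : ℝ) : ℂ)
            - Complex.I * (k:ℂ) * ψ (k • v) * ((2*t : ℝ) : ℂ)‖ / (2*t*k + r)^2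
        ≤ ((‖ψ (k • v)‖ + k * ‖(fderiv ℝ ψ (k • v)) v‖) * (2*t*k + r)
            + k * ‖ψ (k • v)‖ * (2*t)) / (2*t*k + r)^2 := by
      gcongr
    refine step.trans ?_
    exact keyineq hA.le hB.le hL.le ht hr hk (hpsi1 k hk.le) (hpsi2 k hk.le)
      (hder1 k hk.le) (hder2 k hk.le) (norm_nonneg _) (norm_nonneg _)
  -- continuity facts
  have hkC : Continuous (fun k : ℝ => (k : ℂ)) := Complex.continuous_ofReal
  have hEc : Continuous E := by
    simp only [hEdef]
    apply Continuous.cexp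
    continuity
  have hsmulc : Continuous (fun k : ℝ => k • v) := continuous_id.smul continuous_const
  have hψc : Continuous (fun k : ℝ => (ψ (k • v) : ℂ)) := ψ.continuous.comp hsmulc
  have hf'c : Continuous (fun k : ℝ => (fderiv ℝ ψ (k • v) : E3 →L[ℝ] ℂ)) :=
    ((ψ.smooth ⊤).continuous_fderiv (by simp)).comp hsmulc
  have hf'vc : Continuous (fun k : ℝ => (fderiv ℝ ψ (k • v)) v) :=
    (ContinuousLinearMap.apply ℝ ℂ v).continuous.comp hf'c
  have hdenc : Continuous (fun k : ℝ => ((2*t*k + r : ℝ) : ℂ)) := by continuity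
  have hnumc : Continuous (fun k : ℝ =>
      (Complex.I * ψ (k • v) + Complex.I * (k:ℂ) * (fderiv ℝ ψ (k • v) v))
        * ((2*t*k + r : ℝ) : ℂ) - Complex.I * (k:ℂ) * ψ (k • v) * ((2*t : ℝ) : ℂ)) := by
    apply Continuous.sub
    · exact ((continuous_const.mul hψc).add
        ((continuous_const.mul hkC).mul hf'vc)).mul hdenc
    · exact ((continuous_const.mul hkC).mul hψc).mul continuous_const
  have hG'c : ContinuousOn G' (Set.Ioi 0) := by
    simp only [hG'def]
    apply ContinuousOn.div hnumc.continuousOn (hdenc.pow 2).continuousOn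
    intro k hk
    exact pow_ne_zero 2 (hdne k (le_of_lt hk))
  -- dominating functions
  have hdom : Integrable (fun k : ℝ => (3*L + 5*A + 2*B) / ((t + r) * (1 + k^2)))
      (volume.restrict (Set.Ioi 0)) := by
    have heq : (fun k : ℝ => (3*L + 5*A + 2*B) / ((t + r) * (1 + k^2)))
        = fun k : ℝ => ((3*L + 5*A + 2*B)/(t+r)) * (1 + k^2)⁻¹ := by
      funext k
      rw [div_mul_eq_div_div, div_eq_mul_inv]
    rw [heq]
    exact ((integrable_inv_one_add_sq).const_mul _).restrict
  have hdom2 : Integrable (fun k : ℝ => (2*A) * (1+k^2)⁻¹) (volume.restrict (Set.Ioi 0)) :=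
    ((integrable_inv_one_add_sq).const_mul _).restrict
  -- integrability
  have hint2 : IntegrableOn (fun k => E k * G' k) (Set.Ioi 0) := by
    refine Integrable.mono' hdom
      ((hEc.continuousOn.mul hG'c).aestronglyMeasurable measurableSet_Ioi) ?_
    filter_upwards [ae_restrict_mem measurableSet_Ioi] with k hk
    rw [norm_mul, hE1 k, one_mul]
    exact hG'bound k hk
  have hint1 : IntegrableOn (fun k => E k * ((k:ℂ) * ψ (k • v))) (Set.Ioi 0) := by
    refine Integrable.mono' hdom2
      ((hEc.mul (hkC.mul hψc)).aestronglyMeasurable) ?_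
    filter_upwards [ae_restrict_mem measurableSet_Ioi] with k hk
    have hk' : (0:ℝ) < k := hk
    rw [norm_mul, hE1 k, one_mul, norm_mul]
    rw [Complex.norm_real, Real.norm_eq_abs, _root_.abs_of_nonneg hk'.le]
    have h1 : k * ‖ψ (k • v)‖ ≤ k * (A / (1+k^3)) :=
      mul_le_mul_of_nonneg_left (hpsi1 k hk'.le) hk'.le
    refine h1.trans ?_
    have hk2 : (0:ℝ) < 1 + k^2 := by positivity
    have hk3 : (0:ℝ) < 1 + k^3 := by positivity
    have e1 : k * (A/(1+k^3)) = (k*A)/(1+k^3) := by ring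
    have e2 : (2*A) * (1+k^2)⁻¹ = (2*A)/(1+k^2) := by rw [div_eq_mul_inv]
    rw [e1, e2, div_le_div_iff₀ hk3 hk2]
    have poly : k*(1+k^2) ≤ 2*(1+k^3) := by
      nlinarith [sq_nonneg (k-1), mul_nonneg hk'.le (sq_nonneg (k-1))]
    nlinarith [mul_le_mul_of_nonneg_left poly hA.le]
  -- tendsto at infinity
  have htend : Tendsto (fun k => E k * G k) atTop (𝓝 0) := by
    rw [tendsto_zero_iff_norm_tendsto_zero]
    have hlim : Tendsto (fun k : ℝ => (A/2) * (1+k^3)⁻¹) atTop (𝓝 0) := by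
      have h3 : Tendsto (fun k : ℝ => (1+k^3)⁻¹) atTop (𝓝 0) :=
        Tendsto.inv_tendsto_atTop
          (tendsto_atTop_add_const_left _ 1 (tendsto_pow_atTop (by norm_num)))
      simpa using h3.const_mul (A/2)
    refine squeeze_zero' (Eventually.of_forall fun k => norm_nonneg _)
      ((eventually_gt_atTop 0).mono fun k hk => ?_) hlim
    have hdk := hdpos k hk.le
    rw [norm_mul, hE1 k, one_mul]
    simp only [hGdef]
    have enormk : ‖((k : ℝ) : ℂ)‖ = k := by
      rw [Complex.norm_real, Real.norm_eq_abs, _root_.abs_of_nonneg hk.le]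
    have enormd : ‖((2*t*k + r : ℝ) : ℂ)‖ = 2*t*k + r := by
      rw [Complex.norm_real, Real.norm_eq_abs, _root_.abs_of_nonneg hdk.le]
    rw [norm_div, norm_mul, norm_mul, Complex.norm_I, one_mul, enormk, enormd]
    have hd2k : 2*k ≤ 2*t*k + r := by nlinarith
    have hnum_le : k * ‖ψ (k • v)‖ ≤ k * (A / (1+k^3)) :=
      mul_le_mul_of_nonneg_left (hpsi1 k hk.le) hk.le
    have step1 : k * ‖ψ (k • v)‖ / (2*t*k + r) ≤ (k * (A / (1+k^3))) / (2*k) :=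
      div_le_div₀ (by positivity) hnum_le (by positivity) hd2k
    refine step1.trans (le_of_eq ?_)
    have hk3 : (1:ℝ) + k^3 ≠ 0 := by positivity
    field_simp
  -- continuity at 0
  have hcont0 : ContinuousWithinAt (fun k => E k * G k) (Set.Ici (0:ℝ)) 0 := by
    apply ContinuousAt.continuousWithinAt
    apply ContinuousAt.mul hEc.continuousAt
    simp only [hGdef]
    apply ContinuousAt.div (((continuous_const.mul hkC).mul hψc).continuousAt)
      hdenc.continuousAt
    exact hdne 0 le_rfl
  -- FTC
  have hftc := integral_Ioi_of_hasDerivAt_of_tendsto hcont0 hPd (hint1.add hint2) htend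
  have hP0 : E 0 * G 0 = 0 := by simp [hGdef]
  rw [integral_add hint1 hint2, hP0, sub_zero] at hftc
  have hsplit : (∫ k in Set.Ioi (0:ℝ), E k * ((k:ℂ) * ψ (k • v)))
      = - ∫ k in Set.Ioi (0:ℝ), E k * G' k := by
    exact eq_neg_of_add_eq_zero_left hftc
  have hgoal : (∫ k in Set.Ioi (0:ℝ), E k * (k:ℂ) * ψ (k • v))
      = ∫ k in Set.Ioi (0:ℝ), E k * ((k:ℂ) * ψ (k • v)) := by
    simp_rw [mul_assoc]
  rw [hgoal, hsplit, norm_neg]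
  have hb2 : ‖∫ k in Set.Ioi (0:ℝ), E k * G' k‖
      ≤ ∫ k in Set.Ioi (0:ℝ), (3*L + 5*A + 2*B) / ((t + r) * (1 + k^2)) := by
    refine norm_integral_le_of_norm_le hdom ?_
    filter_upwards [ae_restrict_mem measurableSet_Ioi] with k hk
    rw [norm_mul, hE1 k, one_mul]
    exact hG'bound k hk
  refine hb2.trans ?_
  have heq : (fun k : ℝ => (3*L + 5*A + 2*B) / ((t + r) * (1 + k^2)))
      = fun k : ℝ => ((3*L + 5*A + 2*B)/(t+r)) * (1 + k^2)⁻¹ := by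
    funext k
    rw [div_mul_eq_div_div, div_eq_mul_inv]
  rw [heq, integral_const_mul, integral_Ioi_inv_one_add_sq, Real.arctan_zero, sub_zero]
  rw [div_mul_eq_mul_div]
  have hmain : (3*L+5*A+2*B) * (Real.pi/2) ≤ 2*(3*L+5*A+2*B)+1 := by
    nlinarith [Real.pi_le_four, Real.pi_pos]
  exact div_le_div₀ (by positivity) hmain hTpos le_rfl


end B1Aux

end

open B1Aux in
/-- Let `ψ` be Schwartz on `ℝ³` with `ψ(0) = 0`, and let
`Ψ(k) := ∫_{S²} ψ(kω) dΩ(ω)` be its spherical average. Then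
`b₁(x,t) := |x|⁻¹ ∫₀^∞ e^{-ik²t - i|x|k} k Ψ(k) dk` satisfies
`sup_{|x|=R} |b₁(x,t)| ≤ C/(R(R+t))` for all `R > 0`, `t ≥ 1`. -/
theorem b1_estimate (ψ : SchwartzMap (EuclideanSpace ℝ (Fin 3)) ℂ) (hψ : ψ 0 = 0) :
    ∃ C > 0, ∀ R : ℝ, 0 < R → ∀ t : ℝ, 1 ≤ t →
      ∀ x : EuclideanSpace ℝ (Fin 3), ‖x‖ = R →
        ‖(1 / (‖x‖ : ℂ)) *
            ∫ k in Set.Ioi (0 : ℝ),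
              Complex.exp (-Complex.I * (k : ℂ) ^ 2 * t - Complex.I * ‖x‖ * k) * (k : ℂ) *
                ∫ ω : Metric.sphere (0 : EuclideanSpace ℝ (Fin 3)) 1,
                  ψ (k • (ω : EuclideanSpace ℝ (Fin 3)))
                  ∂((volume : Measure (EuclideanSpace ℝ (Fin 3))).toSphere)‖
          ≤ C / (R * (R + t)) := by
  obtain ⟨D, hD, hcore⟩ := core ψ hψ
  obtain ⟨A, hA, B, hB, L, hL, hSA, hSB, hLip, hLf⟩ := schwartz_bounds ψ hψ
  set μS := (volume : Measure E3).toSphere with hμS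
  set m := (μS Set.univ).toReal with hm
  have hmnn : (0:ℝ) ≤ m := ENNReal.toReal_nonneg
  refine ⟨D * m + 1, by positivity, ?_⟩
  intro R hR t ht x hx
  rw [hx]
  have hTpos : (0:ℝ) < t + R := by linarith
  -- global bound used for integrability on the product
  have hbound : ∀ (k : ℝ) (ω : Metric.sphere (0 : E3) 1),
      ‖Complex.exp (-Complex.I * (k:ℂ)^2 * (t:ℂ) - Complex.I * (R:ℂ) * (k:ℂ)) * (k:ℂ)
          * ψ (k • (ω : E3))‖ ≤ (2*A) * (1 + k^2)⁻¹ := by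
    intro k ω
    have hω : ‖(ω : E3)‖ = 1 := by
      have := ω.2
      rwa [Metric.mem_sphere, dist_zero_right] at this
    have hnkv : ‖k • (ω : E3)‖ = |k| := by
      rw [norm_smul, hω, mul_one, Real.norm_eq_abs]
    have habs : (0:ℝ) ≤ |k| := abs_nonneg k
    have hE1 : ‖Complex.exp (-Complex.I * (k:ℂ)^2 * (t:ℂ) - Complex.I * (R:ℂ) * (k:ℂ))‖ = 1 := by
      have hre : (-Complex.I * (k:ℂ)^2 * (t:ℂ) - Complex.I * (R:ℂ) * (k:ℂ)).re = 0 := by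
        simp [Complex.mul_re, Complex.mul_im, pow_two]
      rw [Complex.norm_exp, hre, Real.exp_zero]
    rw [norm_mul, norm_mul, hE1, one_mul, Complex.norm_real, Real.norm_eq_abs]
    have hs : ‖ψ (k • (ω : E3))‖ ≤ A / (1 + |k|^3) := by
      rw [le_div_iff₀ (by positivity)]
      have := hSA (k • (ω : E3)); rw [hnkv] at this; linarith
    have h1 : |k| * ‖ψ (k • (ω : E3))‖ ≤ |k| * (A / (1 + |k|^3)) :=
      mul_le_mul_of_nonneg_left hs habs
    refine h1.trans ?_
    have hk2 : (0:ℝ) < 1 + k^2 := by positivity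
    have hk3 : (0:ℝ) < 1 + |k|^3 := by positivity
    have e1 : |k| * (A/(1+|k|^3)) = (|k| *A)/(1+|k|^3) := by ring
    have e2 : (2*A) * (1+k^2)⁻¹ = (2*A)/(1+k^2) := by rw [div_eq_mul_inv]
    rw [e1, e2, div_le_div_iff₀ hk3 hk2]
    have hsq : k^2 = |k|^2 := (_root_.sq_abs k).symm
    rw [hsq]
    have poly : |k| *(1+|k|^2) ≤ 2*(1+|k|^3) := by
      nlinarith [sq_nonneg (|k|-1), mul_nonneg habs (sq_nonneg (|k|-1))]
    nlinarith [mul_le_mul_of_nonneg_left poly hA.le]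
  -- integrability on the product space
  have hFint : Integrable (Function.uncurry fun (k : ℝ) (ω : Metric.sphere (0 : E3) 1) =>
      Complex.exp (-Complex.I * (k:ℂ)^2 * (t:ℂ) - Complex.I * (R:ℂ) * (k:ℂ)) * (k:ℂ)
        * ψ (k • (ω : E3))) ((volume.restrict (Set.Ioi 0)).prod μS) := by
    have hgint : Integrable (fun z : ℝ × Metric.sphere (0 : E3) 1 =>
        ((2*A) * (1 + z.1^2)⁻¹) * 1) ((volume.restrict (Set.Ioi 0)).prod μS) :=
      Integrable.mul_prod ((integrable_inv_one_add_sq.const_mul (2*A)).restrict)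
        (integrable_const 1)
    have hc : Continuous (Function.uncurry fun (k : ℝ) (ω : Metric.sphere (0 : E3) 1) =>
        Complex.exp (-Complex.I * (k:ℂ)^2 * (t:ℂ) - Complex.I * (R:ℂ) * (k:ℂ)) * (k:ℂ)
          * ψ (k • (ω : E3))) := by
      rw [Function.uncurry_def]
      apply Continuous.mul
      · apply Continuous.mul
        · apply Continuous.cexp
          fun_prop
        · fun_prop
      · exact ψ.continuous.comp ((continuous_fst).smul (continuous_subtype_val.comp continuous_snd))
    refine Integrable.mono' hgint hc.aestronglyMeasurable ?_
    filter_upwards with z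
    rw [mul_one]
    exact hbound z.1 z.2
  -- swap the integrals
  have hswap := MeasureTheory.integral_integral_swap
    (f := fun (k : ℝ) (ω : Metric.sphere (0 : E3) 1) =>
      Complex.exp (-Complex.I * (k:ℂ)^2 * (t:ℂ) - Complex.I * (R:ℂ) * (k:ℂ)) * (k:ℂ)
        * ψ (k • (ω : E3))) hFint
  have hstep : (∫ k in Set.Ioi (0:ℝ),
        Complex.exp (-Complex.I * (k:ℂ)^2 * (t:ℂ) - Complex.I * (R:ℂ) * (k:ℂ)) * (k:ℂ)
          * ∫ ω : Metric.sphere (0 : E3) 1, ψ (k • (ω : E3)) ∂μS)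
      = ∫ ω : Metric.sphere (0 : E3) 1, (∫ k in Set.Ioi (0:ℝ),
          Complex.exp (-Complex.I * (k:ℂ)^2 * (t:ℂ) - Complex.I * (R:ℂ) * (k:ℂ)) * (k:ℂ)
            * ψ (k • (ω : E3))) ∂μS := by
    rw [← hswap]
    simp_rw [integral_const_mul]
  rw [hstep]
  -- bound the sphere integral
  have hsphere : ‖∫ ω : Metric.sphere (0 : E3) 1, (∫ k in Set.Ioi (0:ℝ),
      Complex.exp (-Complex.I * (k:ℂ)^2 * (t:ℂ) - Complex.I * (R:ℂ) * (k:ℂ)) * (k:ℂ)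
        * ψ (k • (ω : E3))) ∂μS‖ ≤ (D / (t + R)) * m := by
    refine norm_integral_le_of_norm_le_const ?_
    filter_upwards with ω
    have hω : ‖(ω : E3)‖ = 1 := by
      have := ω.2
      rwa [Metric.mem_sphere, dist_zero_right] at this
    exact hcore t R ht hR (ω : E3) hω
  have hnorm1R : ‖(1 / (R:ℂ))‖ = 1/R := by
    rw [norm_div, norm_one, Complex.norm_real, Real.norm_eq_abs, _root_.abs_of_pos hR]
  rw [norm_mul, hnorm1R]
  have hfin : (1/R) * ((D / (t + R)) * m) = (D*m) / (R * (t + R)) := by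
    have h1 : R ≠ 0 := hR.ne'
    have h2 : t + R ≠ 0 := hTpos.ne'
    field_simp
  calc (1/R) * ‖∫ ω : Metric.sphere (0 : E3) 1, (∫ k in Set.Ioi (0:ℝ),
        Complex.exp (-Complex.I * (k:ℂ)^2 * (t:ℂ) - Complex.I * (R:ℂ) * (k:ℂ)) * (k:ℂ)
          * ψ (k • (ω : E3))) ∂μS‖
      ≤ (1/R) * ((D / (t + R)) * m) := by
        apply mul_le_mul_of_nonneg_left hsphere (by positivity)
    _ = (D*m) / (R * (t + R)) := hfin
    _ = (D*m) / (R * (R + t)) := by rw [add_comm t R]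
    _ ≤ (D*m + 1) / (R * (R + t)) := by
        gcongr
        linarith
end
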